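/- The function F(σ,τ) = (1/2πi)∮_γ V_λ(λ)√((λ−σ)(λ−τ)) dλ + (T/2)(σ+τ), with V a polynomial, satisfies the Euler–Poisson–Darboux equation 2(τ−σ) ∂²F/∂σ∂τ = ∂F/∂σ − ∂F/∂τ. -/

import Mathlib

/-- Coefficients of the binomial series `√(1−x) = Σ_j sqrtCoeff j · x^j`:
`sqrtCoeff j = C(2j,j)/((1−2j)·4^j)`. -/
noncomputable def sqrtCoeff (j : ℕ) : ℝ :=
  (Nat.choose (2 * j) j : ℝ) / ((1 - 2 * (j : ℝ)) * 4 ^ j)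

/-- The polynomial part of `F(σ,τ) = (1/2πi)∮ V_λ(λ)√((λ−σ)(λ−τ))dλ + (T/2)(σ+τ)` for
`V(λ) = Σ_{m=1}^d g_m λ^m`: since
`√((λ−σ)(λ−τ)) = λ Σ_{j,k} sqrtCoeff j · sqrtCoeff k · σ^j τ^k λ^{-j-k}`, the residue at
infinity of `V_λ √((λ−σ)(λ−τ))` is `Σ_m m g_m Σ_{j+k=m+1} sqrtCoeff j sqrtCoeff k σ^j τ^k`. -/
noncomputable def EPDF (d : ℕ) (g : ℕ → ℝ) (T : ℝ) (σ τ : ℝ) : ℝ :=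
  (∑ m ∈ Finset.Icc 1 d, (m : ℝ) * g m *
      ∑ j ∈ Finset.range (m + 2), sqrtCoeff j * sqrtCoeff (m + 1 - j) * σ ^ j * τ ^ (m + 1 - j))
    + T / 2 * (σ + τ)

open Finset

lemma two_n_sub_one_ne (n : ℕ) : (1 : ℝ) - 2 * n ≠ 0 := by
  intro h
  have h2 : ((2 * n : ℕ) : ℝ) = ((1 : ℕ) : ℝ) := by push_cast; linarith
  have := Nat.cast_injective h2
  omega

/-- The key recurrence for the binomial-series coefficients:
`(n+1)·a_{n+1} = (2n−1)/2 · a_n`. -/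
lemma sqrtCoeff_rec (n : ℕ) :
    ((n : ℝ) + 1) * sqrtCoeff (n + 1) = (2 * n - 1) / 2 * sqrtCoeff n := by
  have h' : (n + 1) * (2 * (n + 1)).choose (n + 1) = 2 * (2 * n + 1) * (2 * n).choose n := by
    simpa [Nat.centralBinom] using Nat.succ_mul_centralBinom_succ n
  have hc : ((n : ℝ) + 1) * ((2 * (n + 1)).choose (n + 1) : ℝ)
      = 2 * (2 * (n : ℝ) + 1) * ((2 * n).choose n : ℝ) := by exact_mod_cast h'
  have h1 : (1 : ℝ) - 2 * (n : ℝ) ≠ 0 := two_n_sub_one_ne n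
  have h2 : (1 : ℝ) - 2 * ((n : ℝ) + 1) ≠ 0 := by
    have := two_n_sub_one_ne (n + 1); push_cast at this; convert this using 1
  unfold sqrtCoeff
  push_cast
  field_simp
  rw [div_eq_div_iff (by convert h2 using 1; ring) (by convert h1 using 1; ring)]
  linear_combination (2 * ((1 - 2 * (n : ℝ)) * 4 ^ n)) * hc

/-- The symmetric cross identity derived from the recurrence. -/
lemma sqrtCoeff_key (j k : ℕ) :
    ((j : ℝ) + 1) * sqrtCoeff (j + 1) * ((2 * k - 1) * sqrtCoeff k)
      = ((k : ℝ) + 1) * sqrtCoeff (k + 1) * ((2 * j - 1) * sqrtCoeff j) := by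
  rw [sqrtCoeff_rec, sqrtCoeff_rec]; ring

lemma pow_pred_mul (k : ℕ) (x : ℝ) : (k : ℝ) * (x * x ^ (k - 1)) = (k : ℝ) * x ^ k := by
  cases k with
  | zero => simp
  | succ n => rw [← pow_succ']; simp

/-- The Euler–Poisson–Darboux identity for a single monomial block. -/
lemma epd_perm (σ τ : ℝ) (m : ℕ) :
    2 * (τ - σ) * ∑ j ∈ range (m + 2),
        sqrtCoeff j * sqrtCoeff (m + 1 - j) * (((j : ℕ) : ℝ) * σ ^ (j - 1))
          * (((m + 1 - j : ℕ) : ℝ) * τ ^ (m - j))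
      = (∑ j ∈ range (m + 2), sqrtCoeff j * sqrtCoeff (m + 1 - j)
            * (((j : ℕ) : ℝ) * σ ^ (j - 1)) * τ ^ (m + 1 - j))
        - ∑ j ∈ range (m + 2), sqrtCoeff j * sqrtCoeff (m + 1 - j) * σ ^ j
            * (((m + 1 - j : ℕ) : ℝ) * τ ^ (m - j)) := by
  rw [Finset.mul_sum]
  rw [← Finset.sum_sub_distrib]
  have step1 : ∀ j ∈ range (m + 2),
      2 * (τ - σ) * (sqrtCoeff j * sqrtCoeff (m + 1 - j) * (((j : ℕ) : ℝ) * σ ^ (j - 1))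
          * (((m + 1 - j : ℕ) : ℝ) * τ ^ (m - j)))
        - (sqrtCoeff j * sqrtCoeff (m + 1 - j) * (((j : ℕ) : ℝ) * σ ^ (j - 1)) * τ ^ (m + 1 - j)
            - sqrtCoeff j * sqrtCoeff (m + 1 - j) * σ ^ j * (((m + 1 - j : ℕ) : ℝ) * τ ^ (m - j)))
      = ((j : ℝ) * (2 * ((m + 1 - j : ℕ) : ℝ) - 1)
            * (sqrtCoeff j * sqrtCoeff (m + 1 - j)) * σ ^ (j - 1) * τ ^ (m + 1 - j))
        - (((m + 1 - j : ℕ) : ℝ) * (2 * (j : ℝ) - 1)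
            * (sqrtCoeff j * sqrtCoeff (m + 1 - j)) * σ ^ j * τ ^ (m - j)) := by
    intro j hj
    have e1 : ((m + 1 - j : ℕ) : ℝ) * τ ^ (m + 1 - j)
        = τ * (((m + 1 - j : ℕ) : ℝ) * τ ^ (m - j)) := by
      have h : m + 1 - j - 1 = m - j := by omega
      rw [← h, ← pow_pred_mul (m + 1 - j) τ]; ring
    have e2 : (j : ℝ) * σ ^ j = σ * ((j : ℝ) * σ ^ (j - 1)) := by
      rw [← pow_pred_mul j σ]; ring
    linear_combination
      (-2 * (sqrtCoeff j * sqrtCoeff (m + 1 - j)) * (j : ℝ) * σ ^ (j - 1)) * e1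
        + (2 * (sqrtCoeff j * sqrtCoeff (m + 1 - j)) * ((m + 1 - j : ℕ) : ℝ) * τ ^ (m - j)) * e2
  rw [← sub_eq_zero, ← Finset.sum_sub_distrib]
  rw [Finset.sum_congr rfl step1]
  rw [Finset.sum_sub_distrib, sub_eq_zero]
  rw [Finset.sum_range_succ'
    (fun j => ((j : ℕ) : ℝ) * (2 * ((m + 1 - j : ℕ) : ℝ) - 1)
      * (sqrtCoeff j * sqrtCoeff (m + 1 - j)) * σ ^ (j - 1) * τ ^ (m + 1 - j)) (m + 1)]
  rw [Finset.sum_range_succ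
    (fun j => ((m + 1 - j : ℕ) : ℝ) * (2 * (j : ℝ) - 1)
      * (sqrtCoeff j * sqrtCoeff (m + 1 - j)) * σ ^ j * τ ^ (m - j)) (m + 1)]
  simp only [Nat.cast_zero, Nat.sub_self, Nat.cast_ofNat, zero_mul, mul_zero, add_zero,
    Nat.cast_zero, zero_mul, Nat.succ_sub_succ]
  apply Finset.sum_congr rfl
  intro j hj
  have hjm : j ≤ m := by
    simp only [Finset.mem_range] at hj; omega
  have h3 : m + 1 - j = (m - j) + 1 := by omega
  rw [h3, Nat.sub_zero]
  push_cast
  linear_combination (σ ^ j * τ ^ (m - j)) * sqrtCoeff_key j (m - j)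

/-- Derivative of `F` in the second variable. -/
lemma hasDerivT (d : ℕ) (g : ℕ → ℝ) (T : ℝ) (s τ : ℝ) :
    HasDerivAt (fun t : ℝ => EPDF d g T s t)
      ((∑ m ∈ Icc 1 d, (m : ℝ) * g m *
          ∑ j ∈ range (m + 2), sqrtCoeff j * sqrtCoeff (m + 1 - j) * s ^ j
            * (((m + 1 - j : ℕ) : ℝ) * τ ^ (m - j))) + T / 2) τ := by
  unfold EPDF
  apply HasDerivAt.add
  · apply HasDerivAt.fun_sum
    intro m _
    apply HasDerivAt.const_mul
    apply HasDerivAt.fun_sum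
    intro j _
    have h := (hasDerivAt_pow (m + 1 - j) τ).const_mul
      (sqrtCoeff j * sqrtCoeff (m + 1 - j) * s ^ j)
    have hx : m + 1 - j - 1 = m - j := by omega
    rw [hx] at h
    exact h
  · have h := ((hasDerivAt_id τ).const_add s).const_mul (T / 2)
    simpa using h

/-- Derivative of `F` in the first variable. -/
lemma hasDerivS (d : ℕ) (g : ℕ → ℝ) (T : ℝ) (σ τ : ℝ) :
    HasDerivAt (fun s : ℝ => EPDF d g T s τ)
      ((∑ m ∈ Icc 1 d, (m : ℝ) * g m *
          ∑ j ∈ range (m + 2), sqrtCoeff j * sqrtCoeff (m + 1 - j)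
            * (((j : ℕ) : ℝ) * σ ^ (j - 1)) * τ ^ (m + 1 - j)) + T / 2) σ := by
  unfold EPDF
  apply HasDerivAt.add
  · apply HasDerivAt.fun_sum
    intro m _
    apply HasDerivAt.const_mul
    apply HasDerivAt.fun_sum
    intro j _
    have h := (((hasDerivAt_pow j σ).const_mul
      (sqrtCoeff j * sqrtCoeff (m + 1 - j))).mul_const (τ ^ (m + 1 - j)))
    exact h
  · have h := ((hasDerivAt_id σ).add_const τ).const_mul (T / 2)
    simpa using h

/-- Derivative in `s` of the `τ`-derivative of `F`. -/
lemma hasDerivST (d : ℕ) (g : ℕ → ℝ) (T : ℝ) (σ τ : ℝ) :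
    HasDerivAt (fun s : ℝ => (∑ m ∈ Icc 1 d, (m : ℝ) * g m *
          ∑ j ∈ range (m + 2), sqrtCoeff j * sqrtCoeff (m + 1 - j) * s ^ j
            * (((m + 1 - j : ℕ) : ℝ) * τ ^ (m - j))) + T / 2)
      (∑ m ∈ Icc 1 d, (m : ℝ) * g m *
          ∑ j ∈ range (m + 2), sqrtCoeff j * sqrtCoeff (m + 1 - j)
            * (((j : ℕ) : ℝ) * σ ^ (j - 1)) * (((m + 1 - j : ℕ) : ℝ) * τ ^ (m - j))) σ := by
  have h : HasDerivAt (fun s : ℝ => (∑ m ∈ Icc 1 d, (m : ℝ) * g m *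
          ∑ j ∈ range (m + 2), sqrtCoeff j * sqrtCoeff (m + 1 - j) * s ^ j
            * (((m + 1 - j : ℕ) : ℝ) * τ ^ (m - j))))
      (∑ m ∈ Icc 1 d, (m : ℝ) * g m *
          ∑ j ∈ range (m + 2), sqrtCoeff j * sqrtCoeff (m + 1 - j)
            * (((j : ℕ) : ℝ) * σ ^ (j - 1)) * (((m + 1 - j : ℕ) : ℝ) * τ ^ (m - j))) σ := by
    apply HasDerivAt.fun_sum
    intro m _
    apply HasDerivAt.const_mul
    apply HasDerivAt.fun_sum
    intro j _
    have h := (((hasDerivAt_pow j σ).const_mul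
      (sqrtCoeff j * sqrtCoeff (m + 1 - j))).mul_const (((m + 1 - j : ℕ) : ℝ) * τ ^ (m - j)))
    exact h
  simpa using h.add_const (T / 2)

/-- The function `F(σ,τ)` satisfies the Euler–Poisson–Darboux equation
`2(τ−σ) ∂²F/∂σ∂τ = ∂F/∂σ − ∂F/∂τ` identically in `σ, τ`. -/
theorem euler_poisson_darboux (d : ℕ) (g : ℕ → ℝ) (T : ℝ) (σ τ : ℝ) :
    2 * (τ - σ) * deriv (fun s : ℝ => deriv (fun t : ℝ => EPDF d g T s t) τ) σ
      = deriv (fun s : ℝ => EPDF d g T s τ) σ - deriv (fun t : ℝ => EPDF d g T σ t) τ := by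
  have hfun : (fun s : ℝ => deriv (fun t : ℝ => EPDF d g T s t) τ)
      = fun s : ℝ => (∑ m ∈ Icc 1 d, (m : ℝ) * g m *
          ∑ j ∈ range (m + 2), sqrtCoeff j * sqrtCoeff (m + 1 - j) * s ^ j
            * (((m + 1 - j : ℕ) : ℝ) * τ ^ (m - j))) + T / 2 :=
    funext fun s => (hasDerivT d g T s τ).deriv
  rw [hfun, (hasDerivST d g T σ τ).deriv, (hasDerivS d g T σ τ).deriv,
    (hasDerivT d g T σ τ).deriv]
  rw [show ∀ A B C : ℝ, (A + C) - (B + C) = A - B from fun A B C => by ring]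
  rw [Finset.mul_sum, ← Finset.sum_sub_distrib]
  apply Finset.sum_congr rfl
  intro m _
  linear_combination ((m : ℝ) * g m) * epd_perm σ τ m
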